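/- arXiv:0812.2841 — 2 statements merged into one kernel-verified Lean document; each statement's English description precedes it below -/
import Mathlib

section
/- If m is a prime number with m > 2, then ∏_{j=1}^{m-1} (2^j + 1) ≡ 1 (mod 2^m − 1). -/
lemma coprime_two_pow_sub_one {j m : ℕ} (h : Nat.Coprime j m) :
    Nat.Coprime (2 ^ j - 1) (2 ^ m - 1) := by
  set d := Nat.gcd (2 ^ j - 1) (2 ^ m - 1) with hd
  have h1 : d ∣ 2 ^ j - 1 := Nat.gcd_dvd_left _ _
  have h2 : d ∣ 2 ^ m - 1 := Nat.gcd_dvd_right _ _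
  have e1 : (2 : ZMod d) ^ j = 1 := by
    have := (ZMod.natCast_eq_natCast_iff _ _ _).mpr
      ((Nat.modEq_iff_dvd' (Nat.one_le_two_pow)).mpr h1).symm
    push_cast at this; exact this
  have e2 : (2 : ZMod d) ^ m = 1 := by
    have := (ZMod.natCast_eq_natCast_iff _ _ _).mpr
      ((Nat.modEq_iff_dvd' (Nat.one_le_two_pow)).mpr h2).symm
    push_cast at this; exact this
  have ho : orderOf (2 : ZMod d) ∣ Nat.gcd j m :=
    Nat.dvd_gcd (orderOf_dvd_of_pow_eq_one e1) (orderOf_dvd_of_pow_eq_one e2)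
  rw [h] at ho
  have h21 : (2 : ZMod d) = 1 := orderOf_eq_one_iff.mp (Nat.eq_one_of_dvd_one ho)
  have h21' : ((2 : ℕ) : ZMod d) = ((1 : ℕ) : ZMod d) := by push_cast; exact h21
  have := (ZMod.natCast_eq_natCast_iff _ _ _).mp h21'
  have hdvd : d ∣ 1 := by
    have h' := (Nat.modEq_iff_dvd' (by norm_num)).mp this.symm
    simpa using h'
  exact Nat.eq_one_of_dvd_one hdvd

theorem prod_two_pow_add_one_modEq_of_prime (m : ℕ) (hm : 2 < m) (hp : m.Prime) :
    (∏ j ∈ Finset.Icc 1 (m - 1), (2 ^ j + 1)) ≡ 1 [MOD 2 ^ m - 1] := by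
  set n := 2 ^ m - 1 with hn
  have hpow : 1 ≤ 2 ^ m := Nat.one_le_two_pow
  have hodd : m % 2 = 1 := Nat.odd_iff.mp (hp.odd_of_ne_two (by omega))
  set c := (m + 1) / 2 with hc
  have h2c : 2 * c = m + 1 := by omega
  set u : ZMod n := (2 : ZMod n) with hu
  -- u ^ m = 1
  have hum : u ^ m = 1 := by
    have : ((2 ^ m : ℕ) : ZMod n) = ((1 : ℕ) : ZMod n) := by
      rw [ZMod.natCast_eq_natCast_iff]
      exact ((Nat.modEq_iff_dvd' hpow).mpr dvd_rfl).symm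
    push_cast at this
    exact this
  -- coprimality of j with m for j in the range
  have hcop : ∀ j ∈ Finset.Icc 1 (m - 1), Nat.Coprime j m := by
    intro j hj
    simp only [Finset.mem_Icc] at hj
    exact Nat.Coprime.symm ((hp.coprime_iff_not_dvd).mpr fun hd => by
      have := Nat.le_of_dvd (by omega) hd; omega)
  -- each 2^j - 1 is a unit in ZMod n
  have hunit : ∀ j ∈ Finset.Icc 1 (m - 1), IsUnit (u ^ j - 1) := by
    intro j hj
    have hco : Nat.Coprime (2 ^ j - 1) n := coprime_two_pow_sub_one (hcop j hj)
    have := (ZMod.isUnit_iff_coprime (2 ^ j - 1) n).mpr hco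
    have hcast : (((2 ^ j - 1 : ℕ)) : ZMod n) = u ^ j - 1 := by
      push_cast [Nat.cast_sub (Nat.one_le_two_pow)]
      rfl
    rwa [hcast] at this
  set Q : ZMod n := ∏ j ∈ Finset.Icc 1 (m - 1), (u ^ j - 1) with hQ
  have hQunit : IsUnit Q := by
    rw [hQ]
    exact Finset.prod_induction _ IsUnit (fun a b ha hb => ha.mul hb) isUnit_one hunit
  -- key bijection: j ↦ 2*j % m permutes Icc 1 (m-1)
  have hmem : ∀ a, ¬ m ∣ a → a ∈ Finset.Icc 1 (m - 1) → 2 * a * c % m ∈ Finset.Icc 1 (m-1) → True := fun _ _ _ _ => trivial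
  have hbij : ∏ j ∈ Finset.Icc 1 (m - 1), (u ^ (2 * j) - 1) = Q := by
    rw [hQ]
    refine Finset.prod_nbij' (fun j => 2 * j % m) (fun k => k * c % m) ?_ ?_ ?_ ?_ ?_
    · intro a ha
      simp only [Finset.mem_Icc] at ha ⊢
      have h1 : 2 * a % m < m := Nat.mod_lt _ (by omega)
      have h2 : ¬ m ∣ 2 * a := by
        intro hd
        rcases (Nat.Prime.dvd_mul hp).mp hd with h | h
        · exact absurd (Nat.le_of_dvd (by omega) h) (by omega)
        · exact absurd (Nat.le_of_dvd (by omega) h) (by omega)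
      have h3 : 2 * a % m ≠ 0 := fun h0 => h2 (Nat.dvd_of_mod_eq_zero h0)
      omega
    · intro a ha
      simp only [Finset.mem_Icc] at ha ⊢
      have h1 : a * c % m < m := Nat.mod_lt _ (by omega)
      have h2 : ¬ m ∣ a * c := by
        intro hd
        rcases (Nat.Prime.dvd_mul hp).mp hd with h | h
        · exact absurd (Nat.le_of_dvd (by omega) h) (by omega)
        · have := Nat.le_of_dvd (by omega) h; omega
      have h3 : a * c % m ≠ 0 := fun h0 => h2 (Nat.dvd_of_mod_eq_zero h0)
      omega
    · intro a ha
      simp only [Finset.mem_Icc] at ha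
      calc (2 * a % m) * c % m = 2 * a * c % m := by rw [Nat.mod_mul_mod]
        _ = (a + a * m) % m := by ring_nf; rw [show a * c * 2 = a + a * m by
              have : a * (2 * c) = a * (m + 1) := by rw [h2c]
              ring_nf at this ⊢; omega]
        _ = a % m := Nat.add_mul_mod_self_right a a m
        _ = a := Nat.mod_eq_of_lt (by omega)
    · intro a ha
      simp only [Finset.mem_Icc] at ha
      calc 2 * (a * c % m) % m = 2 * (a * c) % m := by
              rw [Nat.mul_mod, Nat.mod_mod, ← Nat.mul_mod]
        _ = (a + a * m) % m := by
              congr 1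
              have : a * (2 * c) = a * (m + 1) := by rw [h2c]
              ring_nf at this ⊢; omega
        _ = a % m := Nat.add_mul_mod_self_right a a m
        _ = a := Nat.mod_eq_of_lt (by omega)
    · intro a ha
      rw [← pow_eq_pow_mod _ hum]
  -- product identity: P * Q = ∏ (u^(2j) - 1)
  have hPQ : (∏ j ∈ Finset.Icc 1 (m - 1), (u ^ j + 1)) * Q
      = ∏ j ∈ Finset.Icc 1 (m - 1), (u ^ (2 * j) - 1) := by
    rw [hQ, ← Finset.prod_mul_distrib]
    refine Finset.prod_congr rfl fun j hj => ?_
    have h2j : u ^ (2 * j) = (u ^ j) * (u ^ j) := by rw [two_mul, pow_add]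
    rw [h2j]; ring
  rw [hbij] at hPQ
  have hP1 : (∏ j ∈ Finset.Icc 1 (m - 1), (u ^ j + 1)) = 1 := by
    have := hPQ.trans (one_mul Q).symm
    exact hQunit.mul_right_cancel this
  have : ((∏ j ∈ Finset.Icc 1 (m - 1), (2 ^ j + 1) : ℕ) : ZMod n) = ((1 : ℕ) : ZMod n) := by
    push_cast
    exact hP1
  exact (ZMod.natCast_eq_natCast_iff _ _ _).mp this
end

section
/- Let M be a natural number with M > 1 and let m be an odd natural number with m = c·d where c > 1 and d > 1. If ∏_{j=1}^{m-1} (M^j + 1) ≡ 1 (mod (M^m − 1)/(M − 1)), then 2^{c-1} ≡ 1 (mod Φ_d(M)), where Φ_d(M) is the value of the d-th cyclotomic polynomial at M. -/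
open Polynomial

lemma cyclo_dvd_prod_sub_one (d : ℕ) (hd : 1 < d) (hodd : Odd d) :
    cyclotomic d ℤ ∣ (∏ r ∈ Finset.Ico 1 d, ((X : ℤ[X]) ^ r + 1)) - 1 := by
  have hd0 : 0 < d := by omega
  set ζ : ℂ := Complex.exp (2 * Real.pi * Complex.I / d) with hζdef
  have hζ : IsPrimitiveRoot ζ d := Complex.isPrimitiveRoot_exp d hd0.ne'
  -- evaluate X^d - 1 = ∏ (X - μ) at -1
  have heval := congrArg (Polynomial.eval (-1 : ℂ)) (X_pow_sub_one_eq_prod hd0 hζ)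
  simp only [eval_sub, eval_pow, eval_X, eval_one, eval_prod, eval_C] at heval
  rw [hodd.neg_one_pow] at heval
  have h1mem : (1 : ℂ) ∈ nthRootsFinset d (1 : ℂ) := one_mem_nthRootsFinset hd0
  have hsub : ({1} : Finset ℂ) ⊆ nthRootsFinset d (1 : ℂ) := Finset.singleton_subset_iff.mpr h1mem
  rw [← Finset.prod_sdiff hsub, Finset.prod_singleton] at heval
  have hne2 : (-1 - 1 : ℂ) ≠ 0 := by norm_num
  have hprod1 : ∏ μ ∈ nthRootsFinset d (1 : ℂ) \ {1}, (-1 - μ) = 1 := by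
    have h' : (∏ μ ∈ nthRootsFinset d (1 : ℂ) \ {1}, (-1 - μ)) * (-1 - 1) = 1 * (-1 - 1) := by
      rw [one_mul]; exact heval.symm
    exact mul_right_cancel₀ hne2 h'
  have hcard : (nthRootsFinset d (1 : ℂ) \ {1}).card = d - 1 := by
    rw [Finset.card_sdiff_of_subset hsub, Finset.card_singleton, hζ.card_nthRootsFinset]
  have hprod2 : ∏ μ ∈ nthRootsFinset d (1 : ℂ) \ {1}, (μ + 1) = 1 := by
    have : ∏ μ ∈ nthRootsFinset d (1 : ℂ) \ {1}, (μ + 1)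
        = ∏ μ ∈ nthRootsFinset d (1 : ℂ) \ {1}, (-1 : ℂ) * (-1 - μ) := by
      apply Finset.prod_congr rfl; intro μ _; ring
    rw [this, Finset.prod_mul_distrib, Finset.prod_const, hprod1, hcard,
      (Nat.Odd.sub_odd hodd odd_one).neg_one_pow, mul_one]
  -- reindex
  have key : ∏ r ∈ Finset.Ico 1 d, (ζ ^ r + 1) = 1 := by
    refine Eq.trans ?_ hprod2
    apply Finset.prod_nbij (fun i => ζ ^ i)
    · intro i hi
      simp only [Finset.mem_Ico] at hi
      simp only [Finset.mem_sdiff, Finset.mem_singleton]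
      exact ⟨(mem_nthRootsFinset hd0 (1 : ℂ)).mpr (by rw [← pow_mul, mul_comm, pow_mul, hζ.pow_eq_one, one_pow]),
        hζ.pow_ne_one_of_pos_of_lt (by omega) hi.2⟩
    · intro i hi j hj hij
      simp only [Finset.coe_Ico, Set.mem_Ico] at hi hj
      exact hζ.pow_inj hi.2 hj.2 hij
    · intro μ hμ
      simp only [Finset.coe_sdiff, Finset.coe_singleton, Set.mem_diff, Set.mem_singleton_iff,
        Finset.mem_coe] at hμ
      obtain ⟨hμ1, hμ2⟩ := hμ
      have : NeZero d := ⟨hd0.ne'⟩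
      obtain ⟨i, hik, rfl⟩ := hζ.eq_pow_of_pow_eq_one ((mem_nthRootsFinset hd0 (1 : ℂ)).mp hμ1)
      refine ⟨i, ?_, rfl⟩
      simp only [Finset.coe_Ico, Set.mem_Ico]
      refine ⟨?_, hik⟩
      rcases Nat.eq_zero_or_pos i with rfl | hi
      · simp at hμ2
      · exact hi
    · intro i _; rfl
  -- minimal polynomial argument
  set P : ℤ[X] := (∏ r ∈ Finset.Ico 1 d, ((X : ℤ[X]) ^ r + 1)) - 1 with hP
  have haeval : aeval ζ P = 0 := by
    rw [hP]
    simp only [map_sub, map_prod, map_add, map_pow, aeval_X, map_one]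
    rw [key, sub_self]
  have hdvdQ : cyclotomic d ℚ ∣ P.map (Int.castRingHom ℚ) := by
    rw [cyclotomic_eq_minpoly_rat hζ hd0]
    apply minpoly.dvd
    rwa [show (Int.castRingHom ℚ) = algebraMap ℤ ℚ from rfl, aeval_map_algebraMap]
  rw [← map_cyclotomic_int d ℚ] at hdvdQ
  exact (map_dvd_map (Int.castRingHom ℚ) Int.cast_injective
    (cyclotomic.monic d ℤ)).mp hdvdQ

lemma prod_Ico_eq_two_pow {R : Type*} [CommRing R] (x : R) (d : ℕ) (hd : 0 < d)
    (hx : x ^ d = 1) (hA : ∏ r ∈ Finset.Ico 1 d, (x ^ r + 1) = 1) :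
    ∀ k, 0 < k → ∏ j ∈ Finset.Ico 1 (k * d), (x ^ j + 1) = 2 ^ (k - 1) := by
  intro k hk
  induction k with
  | zero => omega
  | succ k ih =>
    rcases Nat.eq_zero_or_pos k with rfl | hk0
    · simpa using hA
    · have h1 : 1 ≤ k * d := Nat.one_le_iff_ne_zero.mpr (by positivity)
      have h2 : k * d ≤ (k + 1) * d := by nlinarith
      rw [← Finset.prod_Ico_consecutive _ h1 h2, ih hk0]
      have h3 : ∏ j ∈ Finset.Ico (k * d) ((k + 1) * d), (x ^ j + 1) = 2 := by
        rw [Finset.prod_Ico_eq_prod_range]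
        have hdd : (k + 1) * d - k * d = d := by rw [add_mul, one_mul, Nat.add_sub_cancel_left]
        rw [hdd]
        have hcongr : ∀ i ∈ Finset.range d, x ^ (k * d + i) + 1 = x ^ i + 1 := by
          intro i _
          rw [pow_add, mul_comm k d, pow_mul, hx, one_pow, one_mul]
        rw [Finset.prod_congr rfl hcongr, Finset.range_eq_Ico,
          Finset.prod_eq_prod_Ico_succ_bot hd, hA]
        norm_num
      rw [h3]
      have : k + 1 - 1 = k - 1 + 1 := by omega
      rw [this, pow_succ]

theorem two_pow_modEq_one_of_prod_gen (M m c d : ℕ) (hM : 1 < M) (hodd : Odd m)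
    (hm : m = c * d) (hc : 1 < c) (hd : 1 < d)
    (h : (∏ j ∈ Finset.Icc 1 (m - 1), (M ^ j + 1)) ≡ 1 [MOD (M ^ m - 1) / (M - 1)]) :
    (2 : ℤ) ^ (c - 1) ≡ 1 [ZMOD (cyclotomic d ℤ).eval (M : ℤ)] := by
  have hdodd : Odd d := (Nat.odd_mul.mp (hm ▸ hodd)).2
  have hd0 : 0 < d := by omega
  have hm0 : 0 < m := by rw [hm]; positivity
  set K : ℤ := (cyclotomic d ℤ).eval (M : ℤ) with hK
  set n : ℕ := K.natAbs with hn
  -- M^d = 1 in ZMod n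
  have hKd : K ∣ (M : ℤ) ^ d - 1 := by
    have := Polynomial.eval_dvd (x := (M : ℤ)) (cyclotomic.dvd_X_pow_sub_one d ℤ)
    simpa using this
  have hx : ((M : ℕ) : ZMod n) ^ d = 1 := by
    have h1 : ((((M : ℤ) ^ d - 1 : ℤ)) : ZMod n) = 0 := by
      rw [ZMod.intCast_zmod_eq_zero_iff_dvd]
      exact Int.natAbs_dvd.mpr hKd
    push_cast at h1
    linear_combination h1
  -- the product over Ico 1 d is 1 in ZMod n
  have hAdvd : K ∣ (∏ r ∈ Finset.Ico 1 d, ((M : ℤ) ^ r + 1)) - 1 := by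
    have := Polynomial.eval_dvd (x := (M : ℤ)) (cyclo_dvd_prod_sub_one d hd hdodd)
    simpa [eval_prod] using this
  have hA : ∏ r ∈ Finset.Ico 1 d, (((M : ℕ) : ZMod n) ^ r + 1) = 1 := by
    have h1 : (((∏ r ∈ Finset.Ico 1 d, ((M : ℤ) ^ r + 1)) - 1 : ℤ) : ZMod n) = 0 := by
      rw [ZMod.intCast_zmod_eq_zero_iff_dvd]
      exact Int.natAbs_dvd.mpr hAdvd
    push_cast at h1
    linear_combination h1
  -- n divides the modulus (M^m - 1)/(M - 1)
  have hS : (M ^ m - 1) / (M - 1) = ∑ i ∈ Finset.range m, M ^ i := by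
    have hMm : 1 ≤ M ^ m := Nat.one_le_pow _ _ (by omega)
    have hmul : M ^ m - 1 = (∑ i ∈ Finset.range m, M ^ i) * (M - 1) := by
      zify [hM.le, hMm]
      rw [geom_sum_mul]
    exact Nat.div_eq_of_eq_mul_left (by omega) hmul
  have hndvd : n ∣ (M ^ m - 1) / (M - 1) := by
    rw [hS]
    have hdvd : K ∣ ((∑ i ∈ Finset.range m, M ^ i : ℕ) : ℤ) := by
      have hdm : d ∣ m := ⟨c, by rw [hm, mul_comm]⟩
      have := Polynomial.eval_dvd (x := (M : ℤ))
        (cyclotomic_dvd_geom_sum_of_dvd ℤ hdm hd.ne')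
      simpa [eval_finset_sum] using this
    have h5 := Int.natAbs_dvd_natAbs.mpr hdvd
    rwa [Int.natAbs_natCast] at h5
  -- transfer hypothesis h to ZMod n
  have hbig : ∏ j ∈ Finset.Icc 1 (m - 1), (((M : ℕ) : ZMod n) ^ j + 1) = 1 := by
    have h2 : (∏ j ∈ Finset.Icc 1 (m - 1), (M ^ j + 1)) ≡ 1 [MOD n] := h.of_dvd hndvd
    have h3 : (((∏ j ∈ Finset.Icc 1 (m - 1), (M ^ j + 1) : ℕ)) : ZMod n) = ((1 : ℕ) : ZMod n) :=
      (ZMod.natCast_eq_natCast_iff _ _ _).mpr h2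
    push_cast at h3
    exact h3
  -- rewrite Icc 1 (m-1) as Ico 1 m and apply the key lemma
  have hIcc : Finset.Icc 1 (m - 1) = Finset.Ico 1 m := by
    rw [← Finset.Ico_add_one_right_eq_Icc]
    congr 1
    omega
  rw [hIcc] at hbig
  have hkey := prod_Ico_eq_two_pow ((M : ℕ) : ZMod n) d hd0 hx hA c (by omega)
  rw [← hm] at hkey
  have hfinal : (2 : ZMod n) ^ (c - 1) = 1 := by rw [← hkey, hbig]
  -- transfer back to Int.ModEq
  have hdvd2 : K ∣ (2 : ℤ) ^ (c - 1) - 1 := by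
    rw [← Int.natAbs_dvd]
    rw [← ZMod.intCast_zmod_eq_zero_iff_dvd]
    push_cast
    rw [hfinal, sub_self]
  exact (Int.modEq_iff_dvd.mpr (by simpa using hdvd2)).symm
end
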